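/- Let X be a compact Hausdorff space, U ⊆ X a clopen subset, and σ : U → X a local homeomorphism. If L : C_c(U) → C(X) is a linear positive map satisfying L(g · (f ∘ σ)) = L(g) · f for all g ∈ C_c(U) and f ∈ C(X), then there exists a continuous nonnegative function ρ ∈ C(U) such that L(f)(x) = Σ_{y ∈ σ⁻¹(x)} ρ(y) f(y) for all x ∈ σ(U) and L(f)(x) = 0 for x ∉ σ(U). -/

import Mathlib

open scoped ComplexOrder
open Set

/-- Complexification of a real-valued continuous map. -/
noncomputable def CRmap {Y : Type*} [TopologicalSpace Y] (e : C(Y, ℝ)) : C(Y, ℂ) :=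
  (⟨Complex.ofReal, Complex.continuous_ofReal⟩ : C(ℝ, ℂ)).comp e

@[simp] lemma CRmap_apply {Y : Type*} [TopologicalSpace Y] (e : C(Y, ℝ)) (z : Y) :
    CRmap e z = (e z : ℂ) := rfl

lemma tsupport_CRmap {Y : Type*} [TopologicalSpace Y] (e : C(Y, ℝ)) :
    tsupport ⇑(CRmap e) = tsupport ⇑e := by
  have : Function.support ⇑(CRmap e) = Function.support ⇑e := by
    ext z
    simp only [Function.mem_support, ne_eq, CRmap_apply, Complex.ofReal_eq_zero]
  rw [tsupport, tsupport, this]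

/-- Urysohn-type bump: `e = 1` on an open neighbourhood of `y`, `tsupport e ⊆ V`. -/
lemma exists_bump {Y : Type*} [TopologicalSpace Y] [NormalSpace Y] [T1Space Y]
    (y : Y) (V : Set Y) (hV : IsOpen V) (hy : y ∈ V) :
    ∃ (e : C(Y, ℝ)) (W : Set Y), IsOpen W ∧ y ∈ W ∧ Set.EqOn ⇑e 1 W ∧
      tsupport ⇑e ⊆ V ∧ ∀ z, 0 ≤ e z := by
  obtain ⟨W₁, hW₁o, hyW₁, hW₁V⟩ :=
    normal_exists_closure_subset isClosed_singleton hV (by simpa using hy)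
  obtain ⟨W₂, hW₂o, hW₁W₂, hW₂V⟩ :=
    normal_exists_closure_subset isClosed_closure hV hW₁V
  obtain ⟨e, he0, he1, heI⟩ := exists_continuous_zero_one_of_isClosed
    (hW₂o.isClosed_compl) (isClosed_closure (s := W₁))
    (Set.disjoint_left.2 fun a ha hb => ha (hW₁W₂ hb))
  refine ⟨e, W₁, hW₁o, hyW₁ rfl, fun z hz => he1 (subset_closure hz), ?_, fun z => (heI z).1⟩
  refine (closure_mono ?_).trans hW₂V
  intro z hz
  by_contra hzW
  exact hz (he0 hzW)

/-- If `g` vanishes on an open neighbourhood of the fiber over `x`, then `L g x = 0`. -/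
lemma vanish_lemma {X : Type*} [TopologicalSpace X] [CompactSpace X] [T2Space X]
    {U : Set X} {σ : ↥U → X} [CompactSpace ↥U] (hσc : Continuous σ)
    (L : C(↥U, ℂ) →ₗ[ℂ] C(X, ℂ))
    (htrans : ∀ (g : C(↥U, ℂ)) (f : C(X, ℂ)) (h : C(↥U, ℂ)),
      (∀ y, h y = g y * f (σ y)) → ∀ x, L h x = L g x * f x)
    (g : C(↥U, ℂ)) (x : X) (N : Set ↥U) (hN : IsOpen N)
    (hfib : σ ⁻¹' {x} ⊆ N) (hg : ∀ y ∈ N, g y = 0) : L g x = 0 := by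
  have hKc : IsCompact (σ '' Nᶜ) := (hN.isClosed_compl.isCompact).image hσc
  have hxK : x ∉ σ '' Nᶜ := by
    rintro ⟨y, hy, rfl⟩
    exact hy (hfib rfl)
  have hdisj : Disjoint (σ '' Nᶜ) ({x} : Set X) := by
    rw [Set.disjoint_left]
    rintro a ha rfl
    exact hxK ha
  obtain ⟨f, hf0, hf1, hfI⟩ := exists_continuous_zero_one_of_isClosed
    hKc.isClosed isClosed_singleton hdisj
  set fC : C(X, ℂ) := CRmap f with hfC
  set h : C(↥U, ℂ) := g * fC.comp ⟨σ, hσc⟩ with hh_def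
  have hh : ∀ y, h y = g y * fC (σ y) := fun y => rfl
  have hzero : h = 0 := by
    ext y
    by_cases hyN : y ∈ N
    · simp [hh_def, hg y hyN]
    · have hmem : σ y ∈ σ '' Nᶜ := ⟨y, hyN, rfl⟩
      simp [hh_def, hfC, hf0 hmem]
  have htr := htrans g fC h hh x
  rw [hzero, map_zero] at htr
  have hfx : fC x = 1 := by
    have : f x = 1 := hf1 rfl
    simp [hfC, this]
  rw [hfx, mul_one] at htr
  simpa using htr.symm

/-- Transfer on an injectivity neighbourhood: if `g` is supported in the source of a
partial homeomorph realizing `σ`, and `e = 1` on `tsupport g` with `tsupport e` also in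
the source, then `L g (σ y) = L e (σ y) * g y` for `y` in the source. -/
lemma key_lemma {X : Type*} [TopologicalSpace X] [T2Space X]
    {U : Set X} {σ : ↥U → X} [CompactSpace ↥U] (hσc : Continuous σ)
    (L : C(↥U, ℂ) →ₗ[ℂ] C(X, ℂ))
    (htrans : ∀ (g : C(↥U, ℂ)) (f : C(X, ℂ)) (h : C(↥U, ℂ)),
      (∀ y, h y = g y * f (σ y)) → ∀ x, L h x = L g x * f x)
    (φ : OpenPartialHomeomorph ↥U X) (hφ : σ = ↑φ)
    (g e : C(↥U, ℂ)) (hg : tsupport ⇑g ⊆ φ.source)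
    (he : Set.EqOn ⇑e 1 (tsupport ⇑g)) (he' : tsupport ⇑e ⊆ φ.source) :
    ∀ y ∈ φ.source, L g (σ y) = L e (σ y) * g y := by
  classical
  have hKc : IsCompact (σ '' tsupport ⇑g) := (isClosed_tsupport _).isCompact.image hσc
  have hKt : σ '' tsupport ⇑g ⊆ φ.target := by
    rintro _ ⟨z, hz, rfl⟩
    rw [hφ]
    exact φ.map_source (hg hz)
  set F₀ : X → ℂ := fun x => if x ∈ φ.target then g (φ.symm x) else 0 with hF₀
  have hcont : Continuous F₀ := by
    rw [continuous_iff_continuousAt]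
    intro x
    by_cases hx : x ∈ φ.target
    · have h1 : ContinuousOn (⇑g ∘ ⇑φ.symm) φ.target :=
        g.continuous.comp_continuousOn φ.continuousOn_symm
      have h2 : Set.EqOn F₀ (⇑g ∘ ⇑φ.symm) φ.target := fun z hz => if_pos hz
      exact ((h1.congr h2).continuousAt (φ.open_target.mem_nhds hx))
    · have hx' : x ∈ (σ '' tsupport ⇑g)ᶜ := fun hmem => hx (hKt hmem)
      have h2 : Set.EqOn F₀ (fun _ => (0 : ℂ)) (σ '' tsupport ⇑g)ᶜ := by
        intro z hz
        by_cases hzT : z ∈ φ.target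
        · have hzero : g (φ.symm z) = 0 := by
            by_contra hne
            have hmem : φ.symm z ∈ tsupport ⇑g :=
              subset_closure (Function.mem_support.2 hne)
            refine hz ⟨φ.symm z, hmem, ?_⟩
            rw [hφ]
            exact φ.right_inv hzT
          simp [hF₀, if_pos hzT, hzero]
        · simp [hF₀, if_neg hzT]
      exact ((continuousOn_const.congr h2).continuousAt
        (hKc.isClosed.isOpen_compl.mem_nhds hx'))
  set F : C(X, ℂ) := ⟨F₀, hcont⟩ with hF
  have hF1 : ∀ y ∈ φ.source, F (σ y) = g y := by
    intro y hy
    have hyt : σ y ∈ φ.target := by rw [hφ]; exact φ.map_source hy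
    have : φ.symm (σ y) = y := by rw [hφ]; exact φ.left_inv hy
    simp [hF, hF₀, if_pos hyt, this]
  have hmain : ∀ y, (g : C(↥U, ℂ)) y = e y * F (σ y) := by
    intro y
    by_cases hy : y ∈ tsupport ⇑e
    · rw [hF1 y (he' hy)]
      by_cases hgy : y ∈ tsupport ⇑g
      · rw [he hgy]; simp
      · rw [image_eq_zero_of_notMem_tsupport hgy]; simp
    · have hey : e y = 0 := image_eq_zero_of_notMem_tsupport hy
      have hgy : g y = 0 := by
        by_contra hne
        have hmem : y ∈ tsupport ⇑g := subset_closure (Function.mem_support.2 hne)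
        have : e y = 1 := he hmem
        rw [hey] at this
        exact zero_ne_one this
      rw [hgy, hey, zero_mul]
  intro y hy
  have := htrans e F g hmain (σ y)
  rw [this, hF1 y hy]

/-- Fibers of a local homeomorphism on a compact space are finite. -/
lemma fiber_finite {X : Type*} [TopologicalSpace X] [T2Space X]
    {U : Set X} {σ : ↥U → X} [CompactSpace ↥U]
    (hσ : IsLocalHomeomorph σ) (x : X) : (σ ⁻¹' {x}).Finite := by
  have hσc : Continuous σ := hσ.continuous
  set F : Set ↥U := σ ⁻¹' {x} with hFdef
  have hFcl : IsClosed F := isClosed_singleton.preimage hσc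
  have hFc : IsCompact F := hFcl.isCompact
  choose φ hmem hEq using hσ
  have hcover : F ⊆ ⋃ y : ↥F, (φ (y : ↥U)).source := by
    intro z hz
    exact Set.mem_iUnion.2 ⟨⟨z, hz⟩, hmem z⟩
  obtain ⟨t, ht⟩ := hFc.elim_finite_subcover (fun y : ↥F => (φ (y : ↥U)).source)
    (fun y => (φ _).open_source) hcover
  have hsub : F ⊆ (fun y : ↥F => (y : ↥U)) '' ↑t := by
    intro z hz
    obtain ⟨y, hyt, hzy⟩ := Set.mem_iUnion₂.1 (ht hz)
    refine ⟨y, hyt, ?_⟩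
    have h1 : σ z = x := hz
    have h2 : σ (y : ↥U) = x := y.2
    have hinj := (φ (y : ↥U)).injOn
    have : (↑(φ (y : ↥U)) : ↥U → X) z = (↑(φ (y : ↥U)) : ↥U → X) (y : ↥U) := by
      rw [← hEq (y : ↥U), h1, h2]
    exact (hinj hzy (hmem _) this).symm
  exact (t.finite_toSet.image _).subset hsub
/-- every transfer operator `L : C_c(U) → C(X)` for `α(f) = f ∘ σ`
(with `U` clopen in the compact Hausdorff space `X`, so `C_c(U) = C(U)`) is of the
form `L_ρ` for some nonnegative continuous `ρ` on `U`. -/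
theorem transfer_operator_eq_Lrho {X : Type*} [TopologicalSpace X] [CompactSpace X]
    [T2Space X] (U : Set X) (hU : IsClopen U) (σ : U → X) (hσ : IsLocalHomeomorph σ)
    (L : C(U, ℂ) →ₗ[ℂ] C(X, ℂ))
    (hpos : ∀ f : C(U, ℂ), (∀ y, 0 ≤ f y) → ∀ x, 0 ≤ L f x)
    (htrans : ∀ (g : C(U, ℂ)) (f : C(X, ℂ)) (h : C(U, ℂ)),
      (∀ y, h y = g y * f (σ y)) → ∀ x, L h x = L g x * f x) :
    ∃ ρ : C(U, ℝ), (∀ y, 0 ≤ ρ y) ∧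
      ∀ (f : C(U, ℂ)) (x : X),
        (x ∈ Set.range σ → L f x = ∑ᶠ y ∈ σ ⁻¹' {x}, (ρ y : ℂ) * f y) ∧
        (x ∉ Set.range σ → L f x = 0) := by
  classical
  haveI hCU : CompactSpace ↥U := isCompact_iff_compactSpace.mp (hU.isClosed.isCompact)
  have hσc : Continuous σ := hσ.continuous
  -- choose "good" data at every point: a chart and a bump function
  have hGood : ∀ y : ↥U, ∃ (e : C(↥U, ℝ)) (φ : OpenPartialHomeomorph ↥U X) (W : Set ↥U),
      σ = ↑φ ∧ y ∈ φ.source ∧ tsupport ⇑e ⊆ φ.source ∧ IsOpen W ∧ y ∈ W ∧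
      Set.EqOn ⇑e 1 W ∧ ∀ z, 0 ≤ e z := by
    intro y
    obtain ⟨φ, hyφ, hφ⟩ := hσ y
    obtain ⟨e, W, hWo, hyW, heW, hsupp, hnn⟩ := exists_bump y φ.source φ.open_source hyφ
    exact ⟨e, φ, W, hφ, hyφ, hsupp, hWo, hyW, heW, hnn⟩
  choose E Φ Wn hσΦ hyΦ hsupp hWo hyW hEW hEnn using hGood
  set ρf : ↥U → ℝ := fun y => (L (CRmap (E y)) (σ y)).re with hρf
  -- independence of the choice of bump/chart
  have hpair : ∀ (y : ↥U) (e : C(↥U, ℝ)) (φ : OpenPartialHomeomorph ↥U X) (W : Set ↥U),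
      σ = ↑φ → y ∈ φ.source → tsupport ⇑e ⊆ φ.source → IsOpen W → y ∈ W →
      Set.EqOn ⇑e 1 W → L (CRmap e) (σ y) = L (CRmap (E y)) (σ y) := by
    intro y e φ W hφ hyφ hsuppe hWo' hyW' heW'
    have hVo : IsOpen (W ∩ Wn y ∩ φ.source ∩ (Φ y).source) :=
      ((hWo'.inter (hWo y)).inter φ.open_source).inter (Φ y).open_source
    have hyV : y ∈ W ∩ Wn y ∩ φ.source ∩ (Φ y).source :=
      ⟨⟨⟨hyW', hyW y⟩, hyφ⟩, hyΦ y⟩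
    obtain ⟨u, Wu, hWuo, hyWu, huWu, husupp, hunn⟩ := exists_bump y _ hVo hyV
    have hu_supp : tsupport ⇑(CRmap u) ⊆ W ∩ Wn y ∩ φ.source ∩ (Φ y).source := by
      rw [tsupport_CRmap]; exact husupp
    have huy : (CRmap u) y = 1 := by simp [huWu hyWu]
    have h1 := key_lemma hσc L htrans φ hφ (CRmap u) (CRmap e)
      (fun z hz => (hu_supp hz).1.2)
      (fun z hz => by
        have : e z = 1 := heW' (hu_supp hz).1.1.1
        simp [this])
      (by rw [tsupport_CRmap]; exact hsuppe) y hyφ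
    have h2 := key_lemma hσc L htrans (Φ y) (hσΦ y) (CRmap u) (CRmap (E y))
      (fun z hz => (hu_supp hz).2)
      (fun z hz => by
        have : E y z = 1 := hEW y (hu_supp hz).1.1.2
        simp [this])
      (by rw [tsupport_CRmap]; exact hsupp y) y (hyΦ y)
    rw [huy, mul_one] at h1 h2
    rw [← h1, h2]
  have hnonneg : ∀ y : ↥U, 0 ≤ L (CRmap (E y)) (σ y) := fun y =>
    hpos (CRmap (E y)) (fun z => Complex.zero_le_real.mpr (hEnn y z)) (σ y)
  have hEval : ∀ y : ↥U, L (CRmap (E y)) (σ y) = ((ρf y : ℝ) : ℂ) := by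
    intro y
    obtain ⟨hre, him⟩ := Complex.le_def.mp (hnonneg y)
    apply Complex.ext
    · simp [hρf]
    · simpa using him.symm
  have hval : ∀ (y : ↥U) (e : C(↥U, ℝ)) (φ : OpenPartialHomeomorph ↥U X) (W : Set ↥U),
      σ = ↑φ → y ∈ φ.source → tsupport ⇑e ⊆ φ.source → IsOpen W → y ∈ W →
      Set.EqOn ⇑e 1 W → L (CRmap e) (σ y) = ((ρf y : ℝ) : ℂ) :=
    fun y e φ W h1 h2 h3 h4 h5 h6 => (hpair y e φ W h1 h2 h3 h4 h5 h6).trans (hEval y)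
  -- continuity of ρf
  have hρcont : Continuous ρf := by
    rw [continuous_iff_continuousAt]
    intro y₀
    have hco : ContinuousOn (fun y : ↥U => (L (CRmap (E y₀)) (σ y)).re)
        (Wn y₀ ∩ (Φ y₀).source) :=
      (Complex.continuous_re.comp ((L (CRmap (E y₀))).continuous.comp hσc)).continuousOn
    have heq : Set.EqOn ρf (fun y : ↥U => (L (CRmap (E y₀)) (σ y)).re)
        (Wn y₀ ∩ (Φ y₀).source) := by
      intro y hy
      have h := hval y (E y₀) (Φ y₀) (Wn y₀) (hσΦ y₀) hy.2 (hsupp y₀) (hWo y₀) hy.1 (hEW y₀)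
      have := congrArg Complex.re h
      simpa using this.symm
    exact (hco.congr heq).continuousAt
      (((hWo y₀).inter (Φ y₀).open_source).mem_nhds ⟨hyW y₀, hyΦ y₀⟩)
  refine ⟨⟨ρf, hρcont⟩, ?_, ?_⟩
  · intro y
    have := (Complex.le_def.mp (hnonneg y)).1
    simpa [hρf] using this
  intro f x
  constructor
  · -- main formula
    intro hx
    set Fib : Set ↥U := σ ⁻¹' {x} with hFdef
    have hFfin : Fib.Finite := fiber_finite hσ x
    set T : Finset ↥U := hFfin.toFinset with hT
    have hmemT : ∀ y, y ∈ T ↔ y ∈ Fib := fun y => hFfin.mem_toFinset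
    have hbump : ∀ y : ↥U, ∃ (u : C(↥U, ℝ)) (Wu : Set ↥U), y ∈ Fib →
        IsOpen Wu ∧ y ∈ Wu ∧ Set.EqOn ⇑u 1 Wu ∧
          tsupport ⇑u ⊆ Wn y ∩ (Φ y).source ∩ (Fib \ {y})ᶜ ∧ ∀ z, 0 ≤ u z := by
      intro y
      by_cases hy : y ∈ Fib
      · have hVo : IsOpen (Wn y ∩ (Φ y).source ∩ (Fib \ {y})ᶜ) :=
          ((hWo y).inter (Φ y).open_source).inter
            ((hFfin.subset Set.diff_subset).isClosed).isOpen_compl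
        have hyV : y ∈ Wn y ∩ (Φ y).source ∩ (Fib \ {y})ᶜ :=
          ⟨⟨hyW y, hyΦ y⟩, fun h => h.2 rfl⟩
        obtain ⟨u, Wu, h1, h2, h3, h4, h5⟩ := exists_bump y _ hVo hyV
        exact ⟨u, Wu, fun _ => ⟨h1, h2, h3, h4, h5⟩⟩
      · exact ⟨0, ∅, fun h => absurd h hy⟩
    choose uu Wu hup using hbump
    set g : C(↥U, ℂ) := ∑ y ∈ T, CRmap (uu y) * f with hg
    have hfg : L f x = L g x := by
      have hvan : L (f - g) x = 0 := by
        apply vanish_lemma hσc L htrans (f - g) x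
          (⋃ y ∈ T, (Wu y ∩ ⋂ y' ∈ T.erase y, (tsupport ⇑(uu y'))ᶜ))
        · exact isOpen_biUnion fun y hy => (((hup y ((hmemT y).1 hy)).1)).inter
            (isOpen_biInter_finset fun y' _ => (isClosed_tsupport _).isOpen_compl)
        · intro z hz
          have hzF : z ∈ Fib := hz
          refine Set.mem_biUnion ((hmemT z).2 hzF) ⟨(hup z hzF).2.1, ?_⟩
          refine Set.mem_biInter fun y' hy' => ?_
          have hy'F : y' ∈ Fib := (hmemT y').1 (Finset.mem_of_mem_erase hy')
          have hne : y' ≠ z := Finset.ne_of_mem_erase hy'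
          intro hmem
          have hz2 := (hup y' hy'F).2.2.2.1 hmem
          exact hz2.2 ⟨hzF, fun h => hne (by simpa using h.symm)⟩
        · intro z hz
          obtain ⟨y, hyT, hzy⟩ := Set.mem_iUnion₂.1 hz
          have hyF : y ∈ Fib := (hmemT y).1 hyT
          have huy1 : uu y z = 1 := (hup y hyF).2.2.1 hzy.1
          have hsum : g z = f z := by
            rw [hg]
            simp only [ContinuousMap.coe_sum, Finset.sum_apply,
              ContinuousMap.mul_apply, CRmap_apply]
            rw [Finset.sum_eq_single_of_mem y hyT]
            · rw [huy1]; simp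
            · intro y' hy'T hne
              have hz' : z ∉ tsupport ⇑(uu y') :=
                Set.mem_iInter₂.1 hzy.2 y' (Finset.mem_erase.2 ⟨hne, hy'T⟩)
              simp [image_eq_zero_of_notMem_tsupport hz']
          simp [hsum]
      have h2 := congrArg (fun (F : C(X, ℂ)) => F x) (map_sub L f g)
      simp only [ContinuousMap.sub_apply] at h2
      rw [hvan] at h2
      exact (sub_eq_zero.mp h2.symm)
    have hterm : ∀ y ∈ T, L (CRmap (uu y) * f) x = ((ρf y : ℝ) : ℂ) * f y := by
      intro y hyT
      have hyF : y ∈ Fib := (hmemT y).1 hyT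
      obtain ⟨hWuo, hyWu, huW, husupp, hunn⟩ := hup y hyF
      have hsx : σ y = x := hyF
      have hsub1 : tsupport ⇑(CRmap (uu y) * f) ⊆ tsupport ⇑(uu y) := by
        rw [ContinuousMap.coe_mul, ← tsupport_CRmap (uu y)]
        exact tsupport_mul_subset_left
      have hkey := key_lemma hσc L htrans (Φ y) (hσΦ y) (CRmap (uu y) * f) (CRmap (E y))
        (fun z hz => (husupp (hsub1 hz)).1.2)
        (fun z hz => by
          have hzW : z ∈ Wn y := (husupp (hsub1 hz)).1.1
          have : E y z = 1 := hEW y hzW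
          simp [this])
        (by rw [tsupport_CRmap]; exact hsupp y) y (hyΦ y)
      rw [hsx] at hkey
      have hEy : L (CRmap (E y)) x = ((ρf y : ℝ) : ℂ) := by
        rw [← hsx]; exact hEval y
      have huy1 : uu y y = 1 := huW hyWu
      rw [hkey, hEy]
      simp [huy1]
    calc L f x = L g x := hfg
      _ = ∑ y ∈ T, L (CRmap (uu y) * f) x := by
          rw [hg, map_sum]
          simp [ContinuousMap.coe_sum, Finset.sum_apply]
      _ = ∑ y ∈ T, ((ρf y : ℝ) : ℂ) * f y := Finset.sum_congr rfl hterm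
      _ = ∑ᶠ y ∈ (↑T : Set ↥U), (((⟨ρf, hρcont⟩ : C(U, ℝ)) y : ℝ) : ℂ) * f y := by
          rw [finsum_mem_coe_finset]
          rfl
      _ = ∑ᶠ y ∈ σ ⁻¹' {x}, (((⟨ρf, hρcont⟩ : C(U, ℝ)) y : ℝ) : ℂ) * f y := by
          have hco : (↑T : Set ↥U) = σ ⁻¹' {x} := hFfin.coe_toFinset
          rw [hco]
  · -- x outside the range
    intro hx
    refine vanish_lemma hσc L htrans f x ∅ isOpen_empty ?_ (fun y hy => absurd hy (Set.notMem_empty y))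
    intro y hy
    exact absurd ⟨y, hy⟩ hx
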